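/- Let ε, μ > 0, δ := √(μ/3), T > 0, and let ζ, q : [0,T] × [0,∞) → ℝ be of class C³ (all partial derivatives up to order three exist and are continuous) with h := 1 + εζ > 0 everywhere, satisfying both equations of the dimensionless Abbott–Boussinesq system: ∂_t ζ + ∂_x q = 0 and ∂_t q − (μ/3) ∂_x² ∂_t q + ∂_x 𝔣(ζ, q) = 0 on [0,T] × [0,∞), where 𝔣(ζ,q) = (1/(2ε))(h² − 1) + ε q²/h. Fix t ∈ [0,T]; suppose that x ↦ ∂_t q(t,x) is square-integrable on (0,∞), and that v : [0,∞) → ℝ is a C³ function with v, v′, v″, v‴ square-integrable on (0,∞), satisfying v − (μ/3) v″ = 𝔣(ζ,q)(t,·) on [0,∞) and v′(0) = 0. Then for all x ≥ 0, ∂_t² ζ(t,x) = (1/δ²) ( v(x) − 𝔣(ζ,q)(t,x) ) + (1/δ) ∂_t q(t,0) · exp(−x/δ). -/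

import Mathlib

open Set MeasureTheory Function Filter

/-- `f` is square-integrable on `(0, ∞)` (w.r.t. Lebesgue measure). -/
def SqInt (f : ℝ → ℝ) : Prop := IntegrableOn (fun x => f x ^ 2) (Ioi 0)

lemma pd_fst' {F : ℝ → ℝ → ℝ} (hF : Differentiable ℝ (uncurry F)) (s x : ℝ) :
    HasDerivAt (fun s' => F s' x) (fderiv ℝ (uncurry F) (s, x) (1, 0)) s := by
  have h := (hF (s, x)).hasFDerivAt
  have hγ : HasDerivAt (fun s' : ℝ => ((s' : ℝ), x)) ((1 : ℝ), (0 : ℝ)) s :=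
    (hasDerivAt_id s).prodMk (hasDerivAt_const s x)
  exact h.comp_hasDerivAt s hγ

lemma pd_snd' {F : ℝ → ℝ → ℝ} (hF : Differentiable ℝ (uncurry F)) (s x : ℝ) :
    HasDerivAt (fun y => F s y) (fderiv ℝ (uncurry F) (s, x) (0, 1)) x := by
  have h := (hF (s, x)).hasFDerivAt
  have hγ : HasDerivAt (fun y : ℝ => ((s : ℝ), (y : ℝ))) ((0 : ℝ), (1 : ℝ)) x :=
    (hasDerivAt_const x s).prodMk (hasDerivAt_id x)
  exact h.comp_hasDerivAt x hγ

lemma pd2_snd' {G : ℝ × ℝ → (ℝ × ℝ →L[ℝ] ℝ)} (hG : Differentiable ℝ G) (e : ℝ × ℝ) (s x : ℝ) :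
    HasDerivAt (fun y => G (s, y) e) ((fderiv ℝ G (s, x) (0, 1)) e) x := by
  have h := (hG (s, x)).hasFDerivAt
  have hγ : HasDerivAt (fun y : ℝ => ((s : ℝ), (y : ℝ))) ((0 : ℝ), (1 : ℝ)) x :=
    (hasDerivAt_const x s).prodMk (hasDerivAt_id x)
  have hc : HasDerivAt (fun y => G (s, y)) ((fderiv ℝ G (s, x)) (0, 1)) x :=
    h.comp_hasDerivAt x hγ
  simpa using hc.clm_apply (hasDerivAt_const x e)

lemma pd2_fst' {G : ℝ × ℝ → (ℝ × ℝ →L[ℝ] ℝ)} (hG : Differentiable ℝ G) (e : ℝ × ℝ) (s x : ℝ) :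
    HasDerivAt (fun s' => G (s', x) e) ((fderiv ℝ G (s, x) (1, 0)) e) s := by
  have h := (hG (s, x)).hasFDerivAt
  have hγ : HasDerivAt (fun s' : ℝ => ((s' : ℝ), (x : ℝ))) ((1 : ℝ), (0 : ℝ)) s :=
    (hasDerivAt_id s).prodMk (hasDerivAt_const s x)
  have hc : HasDerivAt (fun s' => G (s', x)) ((fderiv ℝ G (s, x)) (1, 0)) s :=
    h.comp_hasDerivAt s hγ
  simpa using hc.clm_apply (hasDerivAt_const s e)

lemma pd3_snd' {G : ℝ × ℝ → (ℝ × ℝ →L[ℝ] ℝ × ℝ →L[ℝ] ℝ)} (hG : Differentiable ℝ G)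
    (e₁ e₂ : ℝ × ℝ) (s x : ℝ) :
    HasDerivAt (fun y => G (s, y) e₁ e₂) ((fderiv ℝ G (s, x) (0, 1)) e₁ e₂) x := by
  have h := (hG (s, x)).hasFDerivAt
  have hγ : HasDerivAt (fun y : ℝ => ((s : ℝ), (y : ℝ))) ((0 : ℝ), (1 : ℝ)) x :=
    (hasDerivAt_const x s).prodMk (hasDerivAt_id x)
  have hc : HasDerivAt (fun y => G (s, y)) ((fderiv ℝ G (s, x)) (0, 1)) x :=
    HasFDerivAt.comp_hasDerivAt (l := G) x h hγ
  have h1 : HasDerivAt (fun y => G (s, y) e₁) ((fderiv ℝ G (s, x) (0, 1)) e₁) x := by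
    simpa using hc.clm_apply (hasDerivAt_const x e₁)
  simpa using h1.clm_apply (hasDerivAt_const x e₂)

/-- constancy on `Ici 0` from vanishing one-sided derivative -/
lemma const_of_derivWithin_zero' {f : ℝ → ℝ}
    (hf : ∀ y ∈ Ici (0 : ℝ), HasDerivWithinAt f 0 (Ici 0) y) :
    ∀ y ∈ Ici (0 : ℝ), f y = f 0 := by
  intro y hy
  have h := constant_of_has_deriv_right_zero (f := f) (a := 0) (b := y)
    (fun z hz => ((hf z hz.1).continuousWithinAt).mono Icc_subset_Ici_self)
    (fun z hz => (hf z hz.1).mono (Ici_subset_Ici.mpr hz.1))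
  exact h y ⟨hy, le_rfl⟩

set_option maxHeartbeats 1000000 in
/-- For a C³ solution of the dimensionless Abbott–Boussinesq system, at each
fixed time `t` one has `∂ₜ²ζ = (1/δ²)(R₁𝔣 − 𝔣) + (1/δ)∂ₜq(t,0)·exp(−x/δ)`,
where `v = R₁𝔣(t,·)` is the Neumann half-line solution and `δ = √(μ/3)`. -/
theorem stmt_8 (ε μ T : ℝ) (hε : 0 < ε) (hμ : 0 < μ) (hT : 0 < T)
    (ζ q : ℝ → ℝ → ℝ)
    (hζ : ContDiff ℝ 3 (Function.uncurry ζ))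
    (hq : ContDiff ℝ 3 (Function.uncurry q))
    (hpos : ∀ t x, 0 < 1 + ε * ζ t x)
    (mass : ∀ t ∈ Icc (0 : ℝ) T, ∀ x ∈ Ici (0 : ℝ),
      deriv (fun s => ζ s x) t + deriv (fun y => q t y) x = 0)
    (mom : ∀ t ∈ Icc (0 : ℝ) T, ∀ x ∈ Ici (0 : ℝ),
      deriv (fun s => q s x) t
        - μ / 3 * iteratedDeriv 2 (fun y => deriv (fun s => q s y) t) x
        + deriv (fun y =>
            1 / (2 * ε) * ((1 + ε * ζ t y) ^ 2 - 1)
              + ε * (q t y) ^ 2 / (1 + ε * ζ t y)) x = 0)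
    (t : ℝ) (ht : t ∈ Icc (0 : ℝ) T)
    (hL2 : SqInt (fun x => deriv (fun s => q s x) t))
    (v v1 v2 v3 : ℝ → ℝ)
    (hv1 : ∀ x ∈ Ici (0 : ℝ), HasDerivWithinAt v (v1 x) (Ici 0) x)
    (hv2 : ∀ x ∈ Ici (0 : ℝ), HasDerivWithinAt v1 (v2 x) (Ici 0) x)
    (hv3 : ∀ x ∈ Ici (0 : ℝ), HasDerivWithinAt v2 (v3 x) (Ici 0) x)
    (hv3c : ContinuousOn v3 (Ici 0))
    (hvL2 : SqInt v) (hv1L2 : SqInt v1) (hv2L2 : SqInt v2) (hv3L2 : SqInt v3)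
    (hveq : ∀ x ∈ Ici (0 : ℝ),
      v x - μ / 3 * v2 x =
        1 / (2 * ε) * ((1 + ε * ζ t x) ^ 2 - 1) + ε * (q t x) ^ 2 / (1 + ε * ζ t x))
    (hvN : v1 0 = 0) :
    ∀ x ∈ Ici (0 : ℝ),
      iteratedDeriv 2 (fun s => ζ s x) t
        = 1 / Real.sqrt (μ / 3) ^ 2 *
            (v x - (1 / (2 * ε) * ((1 + ε * ζ t x) ^ 2 - 1)
              + ε * (q t x) ^ 2 / (1 + ε * ζ t x)))
          + 1 / Real.sqrt (μ / 3) * deriv (fun s => q s 0) t *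
              Real.exp (-x / Real.sqrt (μ / 3)) := by
  intro x hx
  -- differentiability package
  have hQd : Differentiable ℝ (uncurry q) := hq.differentiable (by norm_num)
  have hZd : Differentiable ℝ (uncurry ζ) := hζ.differentiable (by norm_num)
  have hGqc : ContDiff ℝ 2 (fderiv ℝ (uncurry q)) := hq.fderiv_right (by norm_num)
  have hGqd : Differentiable ℝ (fderiv ℝ (uncurry q)) := hGqc.differentiable (by norm_num)
  have hGzd : Differentiable ℝ (fderiv ℝ (uncurry ζ)) :=
    (hζ.fderiv_right (m := 2) (by norm_num)).differentiable (by norm_num)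
  have hG2qd : Differentiable ℝ (fderiv ℝ (fderiv ℝ (uncurry q))) :=
    (hGqc.fderiv_right (m := 1) (by norm_num)).differentiable (by norm_num)
  have hsymm : ∀ p e₁ e₂ : ℝ × ℝ,
      fderiv ℝ (fderiv ℝ (uncurry q)) p e₁ e₂ = fderiv ℝ (fderiv ℝ (uncurry q)) p e₂ e₁ :=
    fun p => second_derivative_symmetric (fun y => (hQd y).hasFDerivAt) ((hGqd p).hasFDerivAt)
  -- abbreviations (plain functions)
  set W : ℝ → ℝ := fun y => fderiv ℝ (uncurry q) (t, y) (1, 0) with hWdef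
  set W1 : ℝ → ℝ := fun y => fderiv ℝ (fderiv ℝ (uncurry q)) (t, y) (0, 1) (1, 0) with hW1def
  set W2 : ℝ → ℝ :=
    fun y => fderiv ℝ (fderiv ℝ (fderiv ℝ (uncurry q))) (t, y) (0, 1) (0, 1) (1, 0) with hW2def
  have hw : ∀ s y, deriv (fun s' => q s' y) s = fderiv ℝ (uncurry q) (s, y) (1, 0) :=
    fun s y => (pd_fst' hQd s y).deriv
  have hwz : ∀ s y, deriv (fun s' => ζ s' y) s = fderiv ℝ (uncurry ζ) (s, y) (1, 0) :=
    fun s y => (pd_fst' hZd s y).deriv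
  have hqx : ∀ s y, deriv (fun y' => q s y') y = fderiv ℝ (uncurry q) (s, y) (0, 1) :=
    fun s y => (pd_snd' hQd s y).deriv
  have hW1 : ∀ y, HasDerivAt W (W1 y) y := fun y => pd2_snd' hGqd (1, 0) t y
  have hW2 : ∀ y, HasDerivAt W1 (W2 y) y := fun y => pd3_snd' hG2qd (0, 1) (1, 0) t y
  have hWc : Continuous W := by
    refine continuous_iff_continuousAt.2 fun y => (hW1 y).continuousAt
  -- Step 1 : iteratedDeriv 2 ζ(·,x) t = - W1 x
  have key1 : iteratedDeriv 2 (fun s => ζ s x) t = -W1 x := by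
    have hABe : EqOn (fun s => fderiv ℝ (uncurry ζ) (s, x) (1, 0))
        (fun s => -(fderiv ℝ (uncurry q) (s, x) (0, 1))) (Icc 0 T) := by
      intro s hs
      have hm := mass s hs x hx
      rw [hwz s x, hqx s x] at hm
      dsimp only
      linarith
    have hAd : HasDerivAt (fun s => fderiv ℝ (uncurry ζ) (s, x) (1, 0))
        ((fderiv ℝ (fderiv ℝ (uncurry ζ)) (t, x) (1, 0)) (1, 0)) t := pd2_fst' hGzd (1, 0) t x
    have hBd : HasDerivAt (fun s => -(fderiv ℝ (uncurry q) (s, x) (0, 1)))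
        (-(fderiv ℝ (fderiv ℝ (uncurry q)) (t, x) (1, 0) (0, 1))) t :=
      (pd2_fst' hGqd (0, 1) t x).neg
    have hUD : UniqueDiffWithinAt ℝ (Icc (0 : ℝ) T) t := uniqueDiffOn_Icc hT t ht
    have e1 : iteratedDeriv 2 (fun s => ζ s x) t
        = deriv (fun s => fderiv ℝ (uncurry ζ) (s, x) (1, 0)) t := by
      rw [iteratedDeriv_succ, iteratedDeriv_one]
      congr 1
      funext s
      exact hwz s x
    have e2 : deriv (fun s => fderiv ℝ (uncurry ζ) (s, x) (1, 0)) t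
        = derivWithin (fun s => fderiv ℝ (uncurry ζ) (s, x) (1, 0)) (Icc 0 T) t := by
      rw [hAd.deriv, hAd.hasDerivWithinAt.derivWithin hUD]
    have e3 : derivWithin (fun s => fderiv ℝ (uncurry ζ) (s, x) (1, 0)) (Icc 0 T) t
        = derivWithin (fun s => -(fderiv ℝ (uncurry q) (s, x) (0, 1))) (Icc 0 T) t :=
      derivWithin_congr hABe (hABe ht)
    have e4 : derivWithin (fun s => -(fderiv ℝ (uncurry q) (s, x) (0, 1))) (Icc 0 T) t
        = -(fderiv ℝ (fderiv ℝ (uncurry q)) (t, x) (1, 0) (0, 1)) :=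
      hBd.hasDerivWithinAt.derivWithin hUD
    rw [e1, e2, e3, e4, hsymm (t, x) (1, 0) (0, 1)]
  -- flux
  set F : ℝ → ℝ := fun y =>
    1 / (2 * ε) * ((1 + ε * ζ t y) ^ 2 - 1) + ε * (q t y) ^ 2 / (1 + ε * ζ t y) with hFdef
  have hFd : ∀ y, DifferentiableAt ℝ F y := by
    intro y
    have h1 : DifferentiableAt ℝ (fun y' => ζ t y') y := (pd_snd' hZd t y).differentiableAt
    have h2 : DifferentiableAt ℝ (fun y' => q t y') y := (pd_snd' hQd t y).differentiableAt
    have h3 : DifferentiableAt ℝ (fun y' => 1 + ε * ζ t y') y :=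
      (differentiableAt_const _).add ((differentiableAt_const _).mul h1)
    exact ((differentiableAt_const _).mul ((h3.pow 2).sub (differentiableAt_const _))).add
      (((differentiableAt_const _).mul (h2.pow 2)).div h3 (ne_of_gt (hpos t y)))
  -- Step 2 : momentum in terms of W, W2
  have hmom : ∀ y ∈ Ici (0 : ℝ), W y - μ / 3 * W2 y + deriv F y = 0 := by
    intro y hy
    have hm := mom t ht y hy
    have eW : (fun y' => deriv (fun s => q s y') t) = W := funext fun y' => hw t y'
    rw [hw t y, eW] at hm
    have e5 : iteratedDeriv 2 W y = W2 y := by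
      rw [iteratedDeriv_succ, iteratedDeriv_one]
      have hdW : deriv W = W1 := funext fun z => (hW1 z).deriv
      rw [hdW]
      exact (hW2 y).deriv
    rw [e5] at hm
    exact hm
  -- Step 3 : Neumann solution equation, differentiated
  have hFv : ∀ y ∈ Ici (0 : ℝ), v1 y - μ / 3 * v3 y = deriv F y := by
    intro y hy
    have hd : HasDerivWithinAt (fun z => v z - μ / 3 * v2 z) (v1 y - μ / 3 * v3 y) (Ici 0) y :=
      (hv1 y hy).sub ((hv3 y hy).const_mul (μ / 3))
    have hd' : HasDerivWithinAt F (v1 y - μ / 3 * v3 y) (Ici 0) y :=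
      hd.congr (fun z hz => (hveq z hz).symm) (hveq y hy).symm
    have hd'' : HasDerivWithinAt F (deriv F y) (Ici 0) y :=
      (hFd y).hasDerivAt.hasDerivWithinAt
    rw [← hd'.derivWithin (uniqueDiffOn_Ici 0 y hy)]
    exact hd''.derivWithin (uniqueDiffOn_Ici 0 y hy)
  -- constants
  have hμ3 : (0 : ℝ) < μ / 3 := by linarith
  have hδpos : 0 < Real.sqrt (μ / 3) := Real.sqrt_pos.2 hμ3
  have hδ2 : Real.sqrt (μ / 3) ^ 2 = μ / 3 := Real.sq_sqrt hμ3.le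
  set δ := Real.sqrt (μ / 3) with hδdef
  set a := δ⁻¹ with hadef
  have hapos : 0 < a := inv_pos.2 hδpos
  have ha2 : a ^ 2 * (μ / 3) = 1 := by
    rw [hadef, ← hδ2]
    field_simp
  -- the function U = W + v1 satisfies U'' = a² U on Ici 0
  set U : ℝ → ℝ := fun y => W y + v1 y with hUdef
  set U1 : ℝ → ℝ := fun y => W1 y + v2 y with hU1def
  have hU1 : ∀ y ∈ Ici (0 : ℝ), HasDerivWithinAt U (U1 y) (Ici 0) y :=
    fun y hy => (hW1 y).hasDerivWithinAt.add (hv2 y hy)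
  have hU2 : ∀ y ∈ Ici (0 : ℝ), HasDerivWithinAt U1 (a ^ 2 * U y) (Ici 0) y := by
    intro y hy
    have hm := hmom y hy
    have hfv := hFv y hy
    have h6 : W2 y + v3 y = a ^ 2 * U y := by
      have h7 : μ / 3 * (W2 y + v3 y) = U y := by
        rw [hUdef]; dsimp only; linarith
      calc W2 y + v3 y = a ^ 2 * (μ / 3) * (W2 y + v3 y) := by rw [ha2]; ring
        _ = a ^ 2 * U y := by rw [mul_assoc, h7]
    have := (hW2 y).hasDerivWithinAt.add (hv3 y hy)
    rw [hU1def]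
    rw [h6] at this
    exact this
  -- exponential helpers
  have hexp : ∀ b y : ℝ, HasDerivAt (fun z : ℝ => Real.exp (b * z)) (Real.exp (b * y) * b) y := by
    intro b y
    have h1 : HasDerivAt (fun z : ℝ => b * z) b y := by
      simpa using (hasDerivAt_id y).const_mul b
    exact (Real.hasDerivAt_exp (b * y)).comp y h1
  have hee : ∀ y : ℝ, Real.exp (-a * y) * Real.exp (a * y) = 1 := by
    intro y
    rw [← Real.exp_add]
    ring_nf
    exact Real.exp_zero
  -- integrating factors g, h
  have hgc : ∀ y ∈ Ici (0 : ℝ), (U1 y + a * U y) * Real.exp (-a * y) = U1 0 + a * U 0 := by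
    have hg0 : ∀ y ∈ Ici (0 : ℝ),
        HasDerivWithinAt (fun z => (U1 z + a * U z) * Real.exp (-a * z)) 0 (Ici 0) y := by
      intro y hy
      have h1 : HasDerivWithinAt (fun z => U1 z + a * U z)
          (a ^ 2 * U y + a * U1 y) (Ici 0) y :=
        (hU2 y hy).add ((hU1 y hy).const_mul a)
      have h2 : HasDerivWithinAt (fun z : ℝ => Real.exp (-a * z))
          (Real.exp (-a * y) * (-a)) (Ici 0) y := (hexp (-a) y).hasDerivWithinAt
      have h3 := h1.fun_mul h2
      refine h3.congr_deriv ?_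
      ring
    intro y hy
    have := const_of_derivWithin_zero' hg0 y hy
    simpa using this
  have hhc : ∀ y ∈ Ici (0 : ℝ), (U1 y - a * U y) * Real.exp (a * y) = U1 0 - a * U 0 := by
    have hh0 : ∀ y ∈ Ici (0 : ℝ),
        HasDerivWithinAt (fun z => (U1 z - a * U z) * Real.exp (a * z)) 0 (Ici 0) y := by
      intro y hy
      have h1 : HasDerivWithinAt (fun z => U1 z - a * U z)
          (a ^ 2 * U y - a * U1 y) (Ici 0) y :=
        (hU2 y hy).sub ((hU1 y hy).const_mul a)
      have h2 : HasDerivWithinAt (fun z : ℝ => Real.exp (a * z))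
          (Real.exp (a * y) * a) (Ici 0) y := (hexp a y).hasDerivWithinAt
      have h3 := h1.fun_mul h2
      refine h3.congr_deriv ?_
      ring
    intro y hy
    have := const_of_derivWithin_zero' hh0 y hy
    simpa using this
  -- square integrability of U
  have hUL2 : IntegrableOn (fun y => U y ^ 2) (Ioi 0) := by
    have hv1c : ContinuousOn v1 (Ici 0) := fun y hy => (hv2 y hy).continuousWithinAt
    have hUcont : ContinuousOn (fun y => U y ^ 2) (Ici 0) := by
      rw [hUdef]
      exact ((hWc.continuousOn.add hv1c).pow 2)
    have hmeas : AEStronglyMeasurable (fun y => U y ^ 2) (volume.restrict (Ioi 0)) :=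
      (hUcont.mono Ioi_subset_Ici_self).aestronglyMeasurable measurableSet_Ioi
    have hWL2 : IntegrableOn (fun y => W y ^ 2) (Ioi 0) := by
      have h13 := hL2
      rw [SqInt] at h13
      simp only [hw] at h13
      rw [hWdef]
      exact h13
    have hdom : Integrable (fun y => 2 * W y ^ 2 + 2 * v1 y ^ 2) (volume.restrict (Ioi 0)) :=
      (hWL2.const_mul 2).add (hv1L2.const_mul 2)
    refine hdom.mono' hmeas (ae_of_all _ fun y => ?_)
    rw [hUdef]
    dsimp only
    rw [Real.norm_eq_abs, abs_of_nonneg (sq_nonneg _)]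
    nlinarith [sq_nonneg (W y - v1 y)]
  -- the growing mode vanishes
  have hc0 : U1 0 + a * U 0 = 0 := by
    by_contra hc
    set c := U1 0 + a * U 0 with hcdef
    set d := U1 0 - a * U 0 with hddef
    -- closed form for 2aU
    have hcf : ∀ y ∈ Ici (0 : ℝ),
        2 * a * U y = c * Real.exp (a * y) - d * Real.exp (-a * y) := by
      intro y hy
      have h1 : U1 y + a * U y = c * Real.exp (a * y) := by
        calc U1 y + a * U y
            = (U1 y + a * U y) * (Real.exp (-a * y) * Real.exp (a * y)) := by
              rw [hee y]; ring
          _ = ((U1 y + a * U y) * Real.exp (-a * y)) * Real.exp (a * y) := by ring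
          _ = c * Real.exp (a * y) := by rw [hgc y hy]
      have h2 : U1 y - a * U y = d * Real.exp (-a * y) := by
        calc U1 y - a * U y
            = (U1 y - a * U y) * (Real.exp (a * y) * Real.exp (-a * y)) := by
              rw [mul_comm (Real.exp (a * y)), hee y]; ring
          _ = ((U1 y - a * U y) * Real.exp (a * y)) * Real.exp (-a * y) := by ring
          _ = d * Real.exp (-a * y) := by rw [hhc y hy]
      linarith
    -- choose R beyond which |U| ≥ 1
    have htend : Tendsto (fun y => |c| * Real.exp (a * y)) atTop atTop :=
      Filter.Tendsto.const_mul_atTop (abs_pos.2 hc)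
        (Real.tendsto_exp_atTop.comp (Filter.Tendsto.const_mul_atTop hapos tendsto_id))
    obtain ⟨R, hR⟩ := Filter.eventually_atTop.1
      ((htend.eventually_ge_atTop (|d| + 2 * a)).and (eventually_ge_atTop (0 : ℝ)))
    set R' := max R 0 with hR'def
    have hbig : ∀ y ∈ Ioi R', (1 : ℝ) ≤ U y ^ 2 := by
      intro y hy
      have hyR : R ≤ y := le_trans (le_max_left R 0) (le_of_lt hy)
      obtain ⟨h8, h9⟩ := hR y hyR
      have hy0 : (0 : ℝ) ≤ y := h9
      have hcf' := hcf y hy0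
      have hexple : Real.exp (-a * y) ≤ 1 := by
        rw [Real.exp_le_one_iff]
        nlinarith
      have habs : 2 * a * |U y| ≥ |c| * Real.exp (a * y) - |d| * Real.exp (-a * y) := by
        have := abs_sub_abs_le_abs_sub (c * Real.exp (a * y)) (d * Real.exp (-a * y))
        rw [abs_mul, abs_mul, abs_of_pos (Real.exp_pos _), abs_of_pos (Real.exp_pos _)] at this
        calc |c| * Real.exp (a * y) - |d| * Real.exp (-a * y)
            ≤ |c * Real.exp (a * y) - d * Real.exp (-a * y)| := this
          _ = |2 * a * U y| := by rw [← hcf']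
          _ = 2 * a * |U y| := by
              rw [abs_mul, abs_of_pos (by linarith : (0:ℝ) < 2 * a)]
      have hdexp : |d| * Real.exp (-a * y) ≤ |d| := by
        nlinarith [abs_nonneg d, Real.exp_pos (-a * y)]
      have h10 : 2 * a * |U y| ≥ 2 * a := by linarith
      have h11 : (1 : ℝ) ≤ |U y| := by nlinarith
      have h12 : (1:ℝ) * 1 ≤ |U y| * |U y| := mul_le_mul h11 h11 zero_le_one (abs_nonneg _)
      nlinarith [sq_abs (U y)]
    have hint1 : IntegrableOn (fun _ : ℝ => (1 : ℝ)) (Ioi R') := by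
      have hsub : Ioi R' ⊆ Ioi 0 := Ioi_subset_Ioi (le_max_right R 0)
      have h12 : IntegrableOn (fun y => U y ^ 2) (Ioi R') := hUL2.mono_set hsub
      refine h12.mono' aestronglyMeasurable_const ?_
      refine (ae_restrict_iff' measurableSet_Ioi).2 (ae_of_all _ fun y hy => ?_)
      rw [Real.norm_eq_abs, abs_one]
      exact hbig y hy
    rw [integrableOn_const_iff] at hint1
    rcases hint1 with h | h
    · norm_num at h
    · rw [Real.volume_Ioi] at h
      exact absurd h (by simp)
  -- decay of U and U1
  have hUdecay : ∀ y ∈ Ici (0 : ℝ), U1 y + a * U y = 0 := by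
    intro y hy
    have h1 := hgc y hy
    rw [hc0] at h1
    have h2 := Real.exp_pos (-a * y)
    rcases mul_eq_zero.1 h1 with h | h
    · exact h
    · exact absurd h h2.ne'
  have hUform : ∀ y ∈ Ici (0 : ℝ), U y = U 0 * Real.exp (-a * y) := by
    intro y hy
    have h2 := hhc y hy
    have hd0 : U1 0 - a * U 0 = -2 * a * U 0 := by
      have := hUdecay 0 Set.self_mem_Ici
      linarith
    have h3 : U1 y - a * U y = -2 * a * U y := by
      have := hUdecay y hy
      linarith
    rw [h3, hd0] at h2
    -- (-2aU y) e^{ay} = -2aU 0  ⇒ U y = U 0 e^{-ay}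
    have hane : a ≠ 0 := ne_of_gt hapos
    have hexpne : Real.exp (a * y) ≠ 0 := (Real.exp_pos _).ne'
    have h4 : U y * Real.exp (a * y) = U 0 := by
      have h5 : (-2 * a) * (U y * Real.exp (a * y)) = (-2 * a) * U 0 := by
        linear_combination h2
      exact mul_left_cancel₀ (show (-2 * a : ℝ) < 0 by nlinarith).ne h5
    calc U y = U y * (Real.exp (a * y) * Real.exp (-a * y)) := by
          rw [mul_comm (Real.exp (a * y)), hee y]; ring
      _ = (U y * Real.exp (a * y)) * Real.exp (-a * y) := by ring
      _ = U 0 * Real.exp (-a * y) := by rw [h4]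
  -- final assembly
  have hU1x : U1 x = -(a * (U 0 * Real.exp (-a * x))) := by
    have h1 := hUdecay x hx
    have h2 := hUform x hx
    rw [h2] at h1
    linarith
  have hU00 : U 0 = W 0 := by
    rw [hUdef]
    dsimp only
    rw [hvN, add_zero]
  have hW1x : -W1 x = v2 x + a * W 0 * Real.exp (-a * x) := by
    have h1 : U1 x = W1 x + v2 x := by rw [hU1def]
    rw [h1, hU00] at hU1x
    linarith
  rw [key1, hW1x]
  have hW0 : deriv (fun s => q s 0) t = W 0 := hw t 0
  rw [hW0]
  have h8 : v x - (1 / (2 * ε) * ((1 + ε * ζ t x) ^ 2 - 1)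
      + ε * (q t x) ^ 2 / (1 + ε * ζ t x)) = μ / 3 * v2 x := by
    have := hveq x hx
    linarith
  rw [h8]
  have hexpeq : Real.exp (-a * x) = Real.exp (-x / δ) := by
    congr 1
    rw [hadef]
    field_simp
  rw [hexpeq, hδ2]
  have hδne : δ ≠ 0 := ne_of_gt hδpos
  have hμne : μ ≠ 0 := ne_of_gt hμ
  rw [hadef]
  field_simp
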